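/- Let k be a field, V a finite-dimensional k-vector space, n ≥ 1 an integer, and f : V → V a k-linear endomorphism. Let c : V^{⊗n} → V^{⊗n} be the cyclic permutation operator v₁⊗v₂⊗⋯⊗vₙ ↦ vₙ⊗v₁⊗⋯⊗v_{n−1}, and let f^{⊗n} : V^{⊗n} → V^{⊗n} be the n-fold tensor power of f. Then the trace of the composite c ∘ f^{⊗n} on V^{⊗n} equals the trace of fⁿ on V: Tr_{V^{⊗n}}(c ∘ f^{⊗n}) = Tr_V(fⁿ). -/

import Mathlib

open scoped TensorProduct
open Matrix PiTensorProduct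

section matrixAux

variable {k : Type*} [CommRing k] {ι : Type*} [Fintype ι] [DecidableEq ι]

theorem path_sum (A : Matrix ι ι k) : ∀ (m : ℕ) (a c : ι),
    (A ^ (m + 1)) a c = ∑ q : Fin m → ι, ∏ j : Fin (m + 1),
      A ((Fin.cons a (Fin.snoc q c) : Fin (m + 2) → ι) j.castSucc)
        ((Fin.cons a (Fin.snoc q c) : Fin (m + 2) → ι) j.succ) := by
  intro m
  induction m with
  | zero =>
      intro a c
      rw [pow_one]
      simp [Fin.snoc]
  | succ m ih =>
      intro a c
      rw [pow_succ', Matrix.mul_apply]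
      rw [← (Fin.consEquiv (fun _ : Fin (m+1) => ι)).sum_comp, Fintype.sum_prod_type]
      simp only [Fin.consEquiv, Equiv.coe_fn_mk]
      refine Finset.sum_congr rfl fun b _ => ?_
      rw [ih b c, Finset.mul_sum]
      refine Finset.sum_congr rfl fun q _ => ?_
      rw [← Fin.cons_snoc_eq_snoc_cons b q c]
      conv_rhs => rw [Fin.prod_univ_succ]
      rw [show (Fin.castSucc 0 : Fin (m+3)) = 0 from rfl, Fin.cons_zero]
      refine congrArg (A a b * ·) (Finset.prod_congr rfl fun j _ => ?_)
      simp only [← Fin.succ_castSucc, Fin.cons_succ]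

theorem cyclic_sum (A : Matrix ι ι k) (m : ℕ) :
    ∑ p : Fin (m + 1) → ι, ∏ j : Fin (m + 1), A (p j) (p ((finRotate (m + 1)).symm j)) =
      Matrix.trace (A ^ (m + 1)) := by
  have h1 : ∀ p : Fin (m + 1) → ι,
      ∏ j, A (p j) (p ((finRotate (m + 1)).symm j)) =
        ∏ j, Aᵀ (p j) (p (finRotate (m + 1) j)) := by
    intro p
    rw [← Equiv.prod_comp (finRotate (m + 1))
      (fun j => A (p j) (p ((finRotate (m + 1)).symm j)))]
    simp only [Equiv.symm_apply_apply, Matrix.transpose_apply]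
  simp only [h1]
  rw [← (Fin.consEquiv (fun _ : Fin (m + 1) => ι)).sum_comp, Fintype.sum_prod_type]
  simp only [Fin.consEquiv, Equiv.coe_fn_mk]
  have key : ∀ (a : ι) (q : Fin m → ι) (j : Fin (m + 1)),
      Aᵀ ((Fin.cons a q : Fin (m + 1) → ι) j)
          ((Fin.cons a q : Fin (m + 1) → ι) (finRotate (m + 1) j)) =
        Aᵀ ((Fin.cons a (Fin.snoc q a) : Fin (m + 2) → ι) j.castSucc)
          ((Fin.cons a (Fin.snoc q a) : Fin (m + 2) → ι) j.succ) := by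
    intro a q j
    congr 1
    · induction j using Fin.cases with
      | zero => simp
      | succ i => rw [← Fin.succ_castSucc]; simp
    · rw [Fin.cons_succ]
      induction j using Fin.lastCases with
      | last => simp [Fin.snoc_last]
      | cast i =>
          rw [finRotate_succ_apply, Fin.coeSucc_eq_succ, Fin.cons_succ, Fin.snoc_castSucc]
  have h2 : ∀ a : ι, ∑ q : Fin m → ι,
      ∏ j : Fin (m + 1), Aᵀ ((Fin.cons a q : Fin (m + 1) → ι) j)
        ((Fin.cons a q : Fin (m + 1) → ι) (finRotate (m + 1) j)) = (Aᵀ ^ (m + 1)) a a := by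
    intro a
    rw [path_sum Aᵀ m a a]
    exact Finset.sum_congr rfl fun q _ => Finset.prod_congr rfl fun j _ => key a q j
  simp only [h2]
  rw [← Matrix.trace_transpose, Matrix.transpose_pow]
  rfl

end matrixAux


section basis

variable {k V : Type*} [Field k] [AddCommGroup V] [Module k V]
variable {ι : Type*} [Fintype ι] [DecidableEq ι] (b : Module.Basis ι k V) (n : ℕ)

/-- The multilinear "coordinates" map. -/
noncomputable def coordML : MultilinearMap k (fun _ : Fin n => V) ((Fin n → ι) → k) :=
  MultilinearMap.pi fun p =>
    (MultilinearMap.mkPiAlgebra k (Fin n) k).compLinearMap fun j => b.coord (p j)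

lemma coordML_apply (v : Fin n → V) (p : Fin n → ι) :
    coordML b n v p = ∏ j, b.repr (v j) (p j) := by
  simp [coordML, MultilinearMap.mkPiAlgebra_apply, Module.Basis.coord_apply]

lemma coordML_basis (p p' : Fin n → ι) :
    coordML b n (fun j => b (p j)) p' = if p = p' then 1 else 0 := by
  rw [coordML_apply]
  have h : ∀ j : Fin n, (b.repr (b (p j)) (p' j)) = if p j = p' j then (1 : k) else 0 :=
    fun j => by rw [Module.Basis.repr_self, Finsupp.single_apply]
  simp only [h]
  simp [Finset.prod_boole, funext_iff]

/-- Inverse map: linear combination of basic tensors. -/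
noncomputable def combML : ((Fin n → ι) → k) →ₗ[k] ⨂[k] _ : Fin n, V :=
  Fintype.linearCombination k fun p : Fin n → ι => tprod k fun j => b (p j)

lemma combML_coordML :
    (combML b n).comp (PiTensorProduct.lift (coordML b n)) = LinearMap.id := by
  apply PiTensorProduct.ext
  apply Module.Basis.ext_multilinear (fun _ => b)
  intro p
  simp only [LinearMap.compMultilinearMap_apply, LinearMap.comp_apply, lift.tprod,
    LinearMap.id_apply]
  rw [combML, Fintype.linearCombination_apply]
  have h : ∀ p' : Fin n → ι,
      coordML b n (fun j => b (p j)) p' • (tprod k fun j => b (p' j)) =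
        if p = p' then ((tprod k fun j => b (p' j)) : ⨂[k] _ : Fin n, V) else 0 := by
    intro p'
    rw [coordML_basis, ite_smul, one_smul, zero_smul]
  simp only [h]
  simp [Finset.sum_ite_eq]

lemma coordML_combML :
    (PiTensorProduct.lift (coordML b n)).comp (combML b n) = LinearMap.id := by
  apply (Pi.basisFun k (Fin n → ι)).ext
  intro p
  rw [LinearMap.comp_apply, LinearMap.id_apply, Pi.basisFun_apply, combML,
    Fintype.linearCombination_apply]
  have h : ∀ p' : Fin n → ι,
      ((Pi.single p (1 : k) : (Fin n → ι) → k) p') • (tprod k fun j => b (p' j)) =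
        if p = p' then ((tprod k fun j => b (p' j)) : ⨂[k] _ : Fin n, V) else 0 := by
    intro p'
    rw [Pi.single_apply, ite_smul, one_smul, zero_smul]
    simp [eq_comm]
  simp only [h, Finset.sum_ite_eq, Finset.mem_univ, if_true]
  ext p'
  rw [lift.tprod, coordML_basis, Pi.single_apply]
  simp [eq_comm]

/-- Module.Basis of the tensor power built from a basis of `V`. -/
noncomputable def tensorBasis : Module.Basis (Fin n → ι) k (⨂[k] _ : Fin n, V) :=
  Module.Basis.ofRepr
    ((LinearEquiv.ofLinear (PiTensorProduct.lift (coordML b n)) (combML b n)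
        (coordML_combML b n) (combML_coordML b n)) ≪≫ₗ
      (Finsupp.linearEquivFunOnFinite k k (Fin n → ι)).symm)

lemma tensorBasis_repr_apply (x : ⨂[k] _ : Fin n, V) (p : Fin n → ι) :
    (tensorBasis b n).repr x p = PiTensorProduct.lift (coordML b n) x p := by
  simp [tensorBasis, Finsupp.linearEquivFunOnFinite]

lemma tensorBasis_apply (p : Fin n → ι) :
    tensorBasis b n p = tprod k fun j => b (p j) := by
  apply (tensorBasis b n).repr.injective
  rw [Module.Basis.repr_self]
  ext p'
  rw [tensorBasis_repr_apply, lift.tprod, coordML_basis, Finsupp.single_apply]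

end basis


/-- The trace of the cyclic permutation operator composed with the `n`-th tensor power of
an endomorphism `f` of a finite-dimensional vector space `V` equals the trace of `fⁿ`:
`Tr_{V^{⊗n}}(c ∘ f^{⊗n}) = Tr_V(fⁿ)`. -/
theorem trace_cyclic_comp_tensorPow {k V : Type*} [Field k] [AddCommGroup V] [Module k V]
    [FiniteDimensional k V] (n : ℕ) (hn : 1 ≤ n) (f : V →ₗ[k] V) :
    LinearMap.trace k (⨂[k] _ : Fin n, V)
      (((PiTensorProduct.reindex k (fun _ : Fin n => V) (finRotate n)).toLinearMap :
          (⨂[k] _ : Fin n, V) →ₗ[k] ⨂[k] _ : Fin n, V) ∘ₗ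
        PiTensorProduct.map (fun _ : Fin n => f)) =
      LinearMap.trace k V (f ^ n) := by
  obtain ⟨m, rfl⟩ : ∃ m, n = m + 1 := ⟨n - 1, by omega⟩
  classical
  let b : Module.Basis (Fin (Module.finrank k V)) k V := Module.finBasis k V
  rw [LinearMap.trace_eq_matrix_trace k (tensorBasis b (m + 1)),
    LinearMap.trace_eq_matrix_trace k b, ← LinearMap.toMatrix_pow,
    ← cyclic_sum (LinearMap.toMatrix b b f) m, Matrix.trace]
  refine Finset.sum_congr rfl fun p _ => ?_
  rw [Matrix.diag_apply, LinearMap.toMatrix_apply, tensorBasis_apply, LinearMap.comp_apply,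
    PiTensorProduct.map_tprod, LinearEquiv.coe_coe, PiTensorProduct.reindex_tprod,
    tensorBasis_repr_apply, PiTensorProduct.lift.tprod, coordML_apply]
  refine Finset.prod_congr rfl fun j _ => ?_
  rw [LinearMap.toMatrix_apply]
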